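/- For any square matrix Q ∈ ℝ^{n×n} and μ > 0, the unique minimizer of (1/μ)‖W‖₊ + (1/2)‖W − Q‖_F² subject to W = Wᵀ is W* = U_r(Σ_r − (1/μ)I_r)V_rᵀ, where Q̃ = (Q + Qᵀ)/2 has SVD UΣVᵀ, Σ_r = diag(σ₁,…,σ_r) are the singular values of Q̃ with σᵢ > 1/μ, and U_r, V_r are the corresponding singular vectors. -/

import Mathlib

open Matrix BigOperators

/-- Nuclear norm: sum of singular values (square roots of eigenvalues of AᴴA). -/
noncomputable def nuclearNorm {m n : Type*} [Fintype m] [Fintype n] [DecidableEq n]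
    (A : Matrix m n ℝ) : ℝ :=
  ∑ i, Real.sqrt ((show (Aᵀ * A).IsHermitian by
    rw [← Matrix.conjTranspose_eq_transpose_of_trivial]
    exact Matrix.isHermitian_conjTranspose_mul_self A).eigenvalues i)

/-- Squared Frobenius norm. -/
def frobSq {m n : Type*} [Fintype m] [Fintype n] (A : Matrix m n ℝ) : ℝ :=
  ∑ i, ∑ j, (A i j) ^ 2

/-- Frobenius norm. -/
noncomputable def frobNorm {m n : Type*} [Fintype m] [Fintype n] (A : Matrix m n ℝ) : ℝ :=
  Real.sqrt (frobSq A)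

namespace Stmt13Aux

variable {n : ℕ}

/-- trace of `C * diagonal e * Cᵀ` when `CᵀC = 1` -/
lemma trace_conj_diag (C : Matrix (Fin n) (Fin n) ℝ) (e : Fin n → ℝ)
    (hC : Cᵀ * C = 1) :
    (C * Matrix.diagonal e * Cᵀ).trace = ∑ i, e i := by
  rw [Matrix.trace_mul_cycle, hC, Matrix.one_mul, Matrix.trace_diagonal]

lemma conj_diag_mul (C : Matrix (Fin n) (Fin n) ℝ) (e f : Fin n → ℝ)
    (hC : Cᵀ * C = 1) :
    (C * Matrix.diagonal e * Cᵀ) * (C * Matrix.diagonal f * Cᵀ)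
      = C * Matrix.diagonal (fun i => e i * f i) * Cᵀ := by
  have h : Matrix.diagonal e * (Cᵀ * C) * Matrix.diagonal f
      = Matrix.diagonal (fun i => e i * f i) := by
    rw [hC, Matrix.mul_one, Matrix.diagonal_mul_diagonal]
  calc (C * Matrix.diagonal e * Cᵀ) * (C * Matrix.diagonal f * Cᵀ)
      = C * (Matrix.diagonal e * (Cᵀ * C) * Matrix.diagonal f) * Cᵀ := by
        simp only [Matrix.mul_assoc]
    _ = _ := by rw [h]

lemma conj_diag_posSemidef (C : Matrix (Fin n) (Fin n) ℝ) (d : Fin n → ℝ)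
    (hd : ∀ i, 0 ≤ d i) :
    Matrix.PosSemidef (C * Matrix.diagonal d * Cᵀ) := by
  have h1 : Matrix.PosSemidef (Matrix.diagonal d) :=
    Matrix.posSemidef_diagonal_iff.mpr hd
  have := h1.mul_mul_conjTranspose_same C
  simpa [Matrix.conjTranspose_eq_transpose_of_trivial] using this

lemma sum_sqrt_eigenvalues {B : Matrix (Fin n) (Fin n) ℝ} (hB : B.IsHermitian)
    (C : Matrix (Fin n) (Fin n) ℝ) (d : Fin n → ℝ) (hC : Cᵀ * C = 1) (hd : ∀ i, 0 ≤ d i)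
    (hBCd : B = C * Matrix.diagonal d * Cᵀ) :
    ∑ i, Real.sqrt (hB.eigenvalues i) = ∑ i, Real.sqrt (d i) := by
  have hPSD : Matrix.PosSemidef B := hBCd ▸ conj_diag_posSemidef C d hd
  set P : Matrix (Fin n) (Fin n) ℝ := (hB.eigenvectorUnitary : Matrix (Fin n) (Fin n) ℝ)
    with hPdef
  have hPorth : Pᵀ * P = 1 := by
    have := (Matrix.mem_unitaryGroup_iff').mp hB.eigenvectorUnitary.2
    simpa [Matrix.star_eq_conjTranspose,
      Matrix.conjTranspose_eq_transpose_of_trivial] using this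
  have hspec : B = P * Matrix.diagonal hB.eigenvalues * Pᵀ := by
    have := hB.spectral_theorem
    simpa [RCLike.ofReal_real_eq_id, Matrix.star_eq_conjTranspose,
      Matrix.conjTranspose_eq_transpose_of_trivial] using this
  have heig : ∀ i, 0 ≤ hB.eigenvalues i := fun i => hPSD.eigenvalues_nonneg i
  set S1 := C * Matrix.diagonal (fun i => Real.sqrt (d i)) * Cᵀ with hS1
  set S2 := P * Matrix.diagonal (fun i => Real.sqrt (hB.eigenvalues i)) * Pᵀ with hS2
  have hS1psd : Matrix.PosSemidef S1 :=
    conj_diag_posSemidef C _ (fun i => Real.sqrt_nonneg _)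
  have hS2psd : Matrix.PosSemidef S2 :=
    conj_diag_posSemidef P _ (fun i => Real.sqrt_nonneg _)
  have hsq : S1 ^ 2 = S2 ^ 2 := by
    rw [pow_two, pow_two, hS1, hS2, conj_diag_mul C _ _ hC, conj_diag_mul P _ _ hPorth]
    have h1 : (fun i => Real.sqrt (d i) * Real.sqrt (d i)) = d := by
      funext i; exact Real.mul_self_sqrt (hd i)
    have h2 : (fun i => Real.sqrt (hB.eigenvalues i) * Real.sqrt (hB.eigenvalues i))
        = hB.eigenvalues := by
      funext i; exact Real.mul_self_sqrt (heig i)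
    rw [h1, h2, ← hBCd, ← hspec]
  have hEq : S1 = S2 := by
    open scoped MatrixOrder in
    exact (CFC.sq_eq_sq_iff S1 S2 hS1psd.nonneg hS2psd.nonneg).mp hsq
  calc ∑ i, Real.sqrt (hB.eigenvalues i) = S2.trace := (trace_conj_diag P _ hPorth).symm
    _ = S1.trace := by rw [hEq]
    _ = ∑ i, Real.sqrt (d i) := trace_conj_diag C _ hC

lemma nuclearNorm_eq (A C : Matrix (Fin n) (Fin n) ℝ) (d : Fin n → ℝ)
    (hC : Cᵀ * C = 1) (hd : ∀ i, 0 ≤ d i)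
    (hA : Aᵀ * A = C * Matrix.diagonal d * Cᵀ) :
    nuclearNorm A = ∑ i, Real.sqrt (d i) :=
  sum_sqrt_eigenvalues (show (Aᵀ * A).IsHermitian by
    rw [← Matrix.conjTranspose_eq_transpose_of_trivial]
    exact Matrix.isHermitian_conjTranspose_mul_self A) C d hC hd hA

/-- Frobenius inner product as a double sum. -/
def ip (A B : Matrix (Fin n) (Fin n) ℝ) : ℝ := ∑ i, ∑ j, A i j * B i j

lemma ip_eq_trace (A B : Matrix (Fin n) (Fin n) ℝ) : ip A B = (Aᵀ * B).trace := by
  simp only [ip, Matrix.trace, Matrix.diag, Matrix.mul_apply, Matrix.transpose_apply]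
  rw [Finset.sum_comm]

lemma ip_comm (A B : Matrix (Fin n) (Fin n) ℝ) : ip A B = ip B A := by
  simp only [ip, mul_comm]

lemma ip_smul_right (c : ℝ) (A B : Matrix (Fin n) (Fin n) ℝ) :
    ip A (c • B) = c * ip A B := by
  simp only [ip, Matrix.smul_apply, smul_eq_mul, Finset.mul_sum]
  exact Finset.sum_congr rfl fun i _ => Finset.sum_congr rfl fun j _ => by ring

lemma ip_sub_right (A B C : Matrix (Fin n) (Fin n) ℝ) :
    ip A (B - C) = ip A B - ip A C := by
  simp only [ip, Matrix.sub_apply, mul_sub, Finset.sum_sub_distrib]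

lemma frobSq_eq_ip (A : Matrix (Fin n) (Fin n) ℝ) : frobSq A = ip A A := by
  simp only [frobSq, ip, sq]

lemma frobSq_add (X Y : Matrix (Fin n) (Fin n) ℝ) :
    frobSq (X + Y) = frobSq X + 2 * ip X Y + frobSq Y := by
  have h : ∀ i j, ((X + Y) i j) ^ 2
      = X i j ^ 2 + 2 * (X i j * Y i j) + Y i j ^ 2 := by
    intro i j; simp only [Matrix.add_apply]; ring
  simp only [frobSq, ip, h, Finset.sum_add_distrib, Finset.mul_sum]

lemma ip_symm_antisym (S K : Matrix (Fin n) (Fin n) ℝ)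
    (hS : Sᵀ = S) (hK : Kᵀ = -K) : ip S K = 0 := by
  have hS' : ∀ i j, S j i = S i j := fun i j => congrFun (congrFun hS i) j
  have hK' : ∀ i j, K j i = -(K i j) := by
    intro i j
    have := congrFun (congrFun hK i) j
    simpa [Matrix.transpose_apply, Matrix.neg_apply] using this
  have h : ip S K = -ip S K := by
    calc ip S K = ∑ j, ∑ i, S i j * K i j := Finset.sum_comm
      _ = ∑ j, ∑ i, -(S j i * K j i) := by
          refine Finset.sum_congr rfl fun j _ => Finset.sum_congr rfl fun i _ => ?_
          rw [hS' j i, hK' j i]; ring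
      _ = -ip S K := by simp [ip, Finset.sum_neg_distrib]
  linarith

lemma frobSq_pos (A : Matrix (Fin n) (Fin n) ℝ) (hA : A ≠ 0) : 0 < frobSq A := by
  have hex : ∃ i j, A i j ≠ 0 := by
    by_contra h
    push_neg at h
    exact hA (by ext i j; simp [h i j])
  obtain ⟨i, j, hij⟩ := hex
  have h1 : 0 < ∑ k, (A i k) ^ 2 := by
    apply Finset.sum_pos' (fun k _ => sq_nonneg _)
    exact ⟨j, Finset.mem_univ _, by positivity⟩
  apply Finset.sum_pos' (fun k _ => Finset.sum_nonneg fun l _ => sq_nonneg _)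
  exact ⟨i, Finset.mem_univ _, h1⟩

lemma trace_five (z lam : Fin n → ℝ) (V U P : Matrix (Fin n) (Fin n) ℝ) :
    (V * Matrix.diagonal z * Uᵀ * (P * Matrix.diagonal lam * Pᵀ)).trace
      = ∑ i, ∑ k, z i * ((Uᵀ * P) i k * (lam k * (Vᵀ * P) i k)) := by
  have h1 : V * Matrix.diagonal z * Uᵀ * (P * Matrix.diagonal lam * Pᵀ)
      = V * (Matrix.diagonal z * ((Uᵀ * P) * (Matrix.diagonal lam * Pᵀ))) := by
    simp only [Matrix.mul_assoc]
  rw [h1, Matrix.trace_mul_comm]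
  have h2 : Matrix.diagonal z * (Uᵀ * P * (Matrix.diagonal lam * Pᵀ)) * V
      = Matrix.diagonal z * ((Uᵀ * P) * (Matrix.diagonal lam * (Pᵀ * V))) := by
    simp only [Matrix.mul_assoc]
  rw [h2]
  simp only [Matrix.trace, Matrix.diag]
  apply Finset.sum_congr rfl; intro i _
  rw [Matrix.diagonal_mul, Matrix.mul_apply, Finset.mul_sum]
  apply Finset.sum_congr rfl; intro k _
  have h3 : (Matrix.diagonal lam * (Pᵀ * V)) k i = lam k * (Vᵀ * P) i k := by
    rw [Matrix.diagonal_mul]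
    congr 1
    simp only [Matrix.mul_apply, Matrix.transpose_apply]
    exact Finset.sum_congr rfl fun j _ => mul_comm _ _
  rw [h3]

/-- Dual bound: for an "operator norm ≤ 1" matrix `U diag(z) Vᵀ` with `0 ≤ z ≤ 1`,
the Frobenius pairing with a symmetric `W` is at most the nuclear norm of `W`. -/
lemma ip_Z_le_nuclear (U V : Matrix (Fin n) (Fin n) ℝ) (z : Fin n → ℝ)
    (hU : Uᵀ * U = 1) (hV : Vᵀ * V = 1)
    (hz0 : ∀ i, 0 ≤ z i) (hz1 : ∀ i, z i ≤ 1)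
    (W : Matrix (Fin n) (Fin n) ℝ) (hW : Wᵀ = W) :
    ip (U * Matrix.diagonal z * Vᵀ) W ≤ nuclearNorm W := by
  have hUU : U * Uᵀ = 1 := mul_eq_one_comm.mp hU
  have hVV : V * Vᵀ = 1 := mul_eq_one_comm.mp hV
  have hherm : W.IsHermitian := by
    rw [Matrix.IsHermitian, Matrix.conjTranspose_eq_transpose_of_trivial, hW]
  set P : Matrix (Fin n) (Fin n) ℝ := (hherm.eigenvectorUnitary : Matrix (Fin n) (Fin n) ℝ)
    with hPdef
  have hPo : Pᵀ * P = 1 := by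
    have := (Matrix.mem_unitaryGroup_iff').mp hherm.eigenvectorUnitary.2
    simpa [Matrix.star_eq_conjTranspose,
      Matrix.conjTranspose_eq_transpose_of_trivial] using this
  have hPP : P * Pᵀ = 1 := mul_eq_one_comm.mp hPo
  set lam := hherm.eigenvalues with hlam
  have hspec : W = P * Matrix.diagonal lam * Pᵀ := by
    have := hherm.spectral_theorem
    simpa [RCLike.ofReal_real_eq_id, Matrix.star_eq_conjTranspose,
      Matrix.conjTranspose_eq_transpose_of_trivial] using this
  -- nuclear norm of W equals the sum of |lam|
  have hWtW : Wᵀ * W = P * Matrix.diagonal (fun i => lam i * lam i) * Pᵀ := by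
    rw [hW]
    nth_rewrite 1 [hspec]
    nth_rewrite 1 [hspec]
    exact conj_diag_mul P lam lam hPo
  have hnn : nuclearNorm W = ∑ k, |lam k| := by
    rw [nuclearNorm_eq W P _ hPo (fun i => mul_self_nonneg _) hWtW]
    exact Finset.sum_congr rfl fun k _ => Real.sqrt_mul_self_eq_abs _
  -- compute the pairing
  have hZt : (U * Matrix.diagonal z * Vᵀ)ᵀ = V * Matrix.diagonal z * Uᵀ := by
    simp [Matrix.transpose_mul, Matrix.diagonal_transpose, Matrix.mul_assoc]
  rw [ip_eq_trace, hZt]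
  nth_rewrite 1 [hspec]
  rw [trace_five]
  set A := Uᵀ * P with hA
  set B := Vᵀ * P with hB
  have hA1 : Aᵀ * A = 1 := by
    have h : Aᵀ * A = Pᵀ * (U * Uᵀ * P) := by
      rw [hA, Matrix.transpose_mul, Matrix.transpose_transpose]
      simp only [Matrix.mul_assoc]
    rw [h, hUU, Matrix.one_mul, hPo]
  have hB1 : Bᵀ * B = 1 := by
    have h : Bᵀ * B = Pᵀ * (V * Vᵀ * P) := by
      rw [hB, Matrix.transpose_mul, Matrix.transpose_transpose]
      simp only [Matrix.mul_assoc]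
    rw [h, hVV, Matrix.one_mul, hPo]
  have hcolA : ∀ k, ∑ i, (A i k) ^ 2 = 1 := by
    intro k
    have := congrFun (congrFun hA1 k) k
    simpa [Matrix.mul_apply, Matrix.transpose_apply, Matrix.one_apply, sq] using this
  have hcolB : ∀ k, ∑ i, (B i k) ^ 2 = 1 := by
    intro k
    have := congrFun (congrFun hB1 k) k
    simpa [Matrix.mul_apply, Matrix.transpose_apply, Matrix.one_apply, sq] using this
  have hswap : ∑ i, ∑ k, z i * (A i k * (lam k * B i k))
      = ∑ k, lam k * ∑ i, z i * (A i k * B i k) := by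
    rw [Finset.sum_comm]
    refine Finset.sum_congr rfl fun k _ => ?_
    rw [Finset.mul_sum]
    exact Finset.sum_congr rfl fun i _ => by ring
  rw [hswap, hnn]
  apply Finset.sum_le_sum
  intro k _
  have hs : |∑ i, z i * (A i k * B i k)| ≤ 1 := by
    have h1 : |∑ i, z i * (A i k * B i k)| ≤ ∑ i, |A i k| * |B i k| := by
      refine (Finset.abs_sum_le_sum_abs _ _).trans (Finset.sum_le_sum fun i _ => ?_)
      rw [abs_mul, abs_mul]
      have hzi : |z i| ≤ 1 := abs_le.mpr ⟨by linarith [hz0 i], hz1 i⟩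
      calc |z i| * (|A i k| * |B i k|) ≤ 1 * (|A i k| * |B i k|) :=
            mul_le_mul_of_nonneg_right hzi (by positivity)
        _ = |A i k| * |B i k| := one_mul _
    have h2 : (∑ i, |A i k| * |B i k|) ^ 2
        ≤ (∑ i, |A i k| ^ 2) * ∑ i, |B i k| ^ 2 :=
      Finset.sum_mul_sq_le_sq_mul_sq _ _ _
    have h3 : ∑ i, |A i k| ^ 2 = 1 := by simpa [sq_abs] using hcolA k
    have h4 : ∑ i, |B i k| ^ 2 = 1 := by simpa [sq_abs] using hcolB k
    have h6 : 0 ≤ ∑ i, |A i k| * |B i k| :=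
      Finset.sum_nonneg fun i _ => mul_nonneg (abs_nonneg _) (abs_nonneg _)
    have h5 : ∑ i, |A i k| * |B i k| ≤ 1 := by nlinarith
    linarith [h1.trans h5]
  calc lam k * ∑ i, z i * (A i k * B i k)
      ≤ |lam k * ∑ i, z i * (A i k * B i k)| := le_abs_self _
    _ = |lam k| * |∑ i, z i * (A i k * B i k)| := abs_mul _ _
    _ ≤ |lam k| * 1 := mul_le_mul_of_nonneg_left hs (abs_nonneg _)
    _ = |lam k| := mul_one _

end Stmt13Aux

open Stmt13Aux in
theorem stmt13 {n : ℕ} (Q : Matrix (Fin n) (Fin n) ℝ) (μ : ℝ) (hμ : 0 < μ)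
    (U V : Matrix (Fin n) (Fin n) ℝ) (σ : Fin n → ℝ)
    (hU : Uᵀ * U = 1) (hV : Vᵀ * V = 1) (hσ : ∀ i, 0 ≤ σ i)
    (hSVD : (1 / 2 : ℝ) • (Q + Qᵀ) = U * Matrix.diagonal σ * Vᵀ)
    (Wstar : Matrix (Fin n) (Fin n) ℝ)
    (hWstar : Wstar = U * Matrix.diagonal (fun i => max (σ i - 1 / μ) 0) * Vᵀ) :
    Wstarᵀ = Wstar ∧
      ∀ W : Matrix (Fin n) (Fin n) ℝ, Wᵀ = W → W ≠ Wstar →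
        (1 / μ) * nuclearNorm Wstar + (1 / 2) * frobSq (Wstar - Q) <
          (1 / μ) * nuclearNorm W + (1 / 2) * frobSq (W - Q) := by
  have hμ' : (0:ℝ) < 1 / μ := by positivity
  set f : Fin n → ℝ := fun i => max (σ i - 1 / μ) 0 with hf
  have hf0 : ∀ i, 0 ≤ f i := fun i => le_max_right _ _
  set z : Fin n → ℝ := fun i => μ * (σ i - f i) with hz
  have hzval : ∀ i, z i = μ * min (σ i) (1 / μ) := by
    intro i
    simp only [hz, hf]
    rcases le_total (σ i) (1 / μ) with h | h
    · rw [max_eq_right (by linarith), min_eq_left h]; ring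
    · rw [max_eq_left (by linarith), min_eq_right h]; ring
  have hz0 : ∀ i, 0 ≤ z i := by
    intro i
    rw [hzval i]
    exact mul_nonneg hμ.le (le_min (hσ i) hμ'.le)
  have hz1 : ∀ i, z i ≤ 1 := by
    intro i
    rw [hzval i]
    calc μ * min (σ i) (1 / μ) ≤ μ * (1 / μ) :=
          mul_le_mul_of_nonneg_left (min_le_right _ _) hμ.le
      _ = 1 := by field_simp
  have hzf : ∀ i, z i * f i = f i := by
    intro i
    rcases le_or_gt (σ i) (1 / μ) with h | h
    · have hfi : f i = 0 := by simp only [hf]; exact max_eq_right (by linarith)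
      rw [hfi, mul_zero]
    · have h1 : z i = 1 := by
        rw [hzval i, min_eq_right h.le]; field_simp
      rw [h1, one_mul]
  have hUU : U * Uᵀ = 1 := mul_eq_one_comm.mp hU
  have hVV : V * Vᵀ = 1 := mul_eq_one_comm.mp hV
  set D := Matrix.diagonal σ with hD
  set Z := U * Matrix.diagonal z * Vᵀ with hZ
  set Qt := (1 / 2 : ℝ) • (Q + Qᵀ) with hQt
  have hQtT : Qtᵀ = Qt := by
    rw [hQt]
    simp [Matrix.transpose_smul, Matrix.transpose_add, add_comm]
  -- symmetry of Wstar
  set M := Vᵀ * U with hM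
  have hMT : Mᵀ = Uᵀ * V := by rw [hM, Matrix.transpose_mul, Matrix.transpose_transpose]
  have hMM : Mᵀ * M = 1 := by
    rw [hMT, hM]
    calc Uᵀ * V * (Vᵀ * U) = Uᵀ * (V * Vᵀ * U) := by simp only [Matrix.mul_assoc]
      _ = 1 := by rw [hVV, Matrix.one_mul, hU]
  have hMM' : M * Mᵀ = 1 := mul_eq_one_comm.mp hMM
  have hsymUV : V * D * Uᵀ = U * D * Vᵀ := by
    have h1 : Qtᵀ = V * D * Uᵀ := by
      rw [hSVD]
      simp [hD, Matrix.transpose_mul, Matrix.diagonal_transpose, Matrix.mul_assoc]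
    rw [← h1, hQtT, hSVD]
  have hMDM : M * D * M = D := by
    have h2 : Vᵀ * (V * D * Uᵀ) * U = D := by
      calc Vᵀ * (V * D * Uᵀ) * U = Vᵀ * (V * (D * (Uᵀ * U))) := by
            simp only [Matrix.mul_assoc]
        _ = Vᵀ * (V * D) := by rw [hU, Matrix.mul_one]
        _ = Vᵀ * V * D := by rw [Matrix.mul_assoc]
        _ = D := by rw [hV, Matrix.one_mul]
    have h3 : Vᵀ * (U * D * Vᵀ) * U = M * D * M := by
      rw [hM]; simp only [Matrix.mul_assoc]
    rw [← h3, ← hsymUV]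
    exact h2
  have hDM : D * M = Mᵀ * D := by
    calc D * M = Mᵀ * M * (D * M) := by rw [hMM, Matrix.one_mul]
      _ = Mᵀ * (M * D * M) := by simp only [Matrix.mul_assoc]
      _ = Mᵀ * D := by rw [hMDM]
  have hMD : M * D = D * Mᵀ := by
    calc M * D = M * D * (M * Mᵀ) := by rw [hMM', Matrix.mul_one]
      _ = M * D * M * Mᵀ := by simp only [Matrix.mul_assoc]
      _ = D * Mᵀ := by rw [hMDM]
  have e1 : ∀ i j, σ i * M i j = M j i * σ j := by
    intro i j
    have h := congrFun (congrFun hDM i) j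
    simpa [hD, Matrix.diagonal_mul, Matrix.mul_diagonal, Matrix.transpose_apply] using h
  have e2 : ∀ i j, M i j * σ j = σ i * M j i := by
    intro i j
    have h := congrFun (congrFun hMD i) j
    simpa [hD, Matrix.diagonal_mul, Matrix.mul_diagonal, Matrix.transpose_apply] using h
  have key : ∀ i j, M i j * f j = f i * M j i := by
    intro i j
    rcases eq_or_ne (σ i) (σ j) with heq | hne
    · have hfij : f i = f j := by simp only [hf, heq]
      rcases le_or_gt (σ j) (1 / μ) with hle | hgt
      · have hfj : f j = 0 := by simp only [hf]; exact max_eq_right (by linarith)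
        rw [hfj, hfij, hfj]; ring
      · have hσj : σ j ≠ 0 := ne_of_gt (lt_trans hμ' hgt)
        have h := e1 i j
        rw [heq] at h
        have hMij : M i j = M j i :=
          mul_left_cancel₀ hσj (by linarith)
        rw [hMij, hfij]; ring
    · have hsqne : σ i ^ 2 - σ j ^ 2 ≠ 0 := by
        intro h
        apply hne
        have hsq : σ i ^ 2 = σ j ^ 2 := by linarith
        calc σ i = Real.sqrt (σ i ^ 2) := (Real.sqrt_sq (hσ i)).symm
          _ = Real.sqrt (σ j ^ 2) := by rw [hsq]
          _ = σ j := Real.sqrt_sq (hσ j)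
      have hMij : M i j = 0 := by
        have h3 : (σ i ^ 2 - σ j ^ 2) * M i j = 0 := by
          linear_combination σ i * e1 i j - σ j * e2 i j
        exact (mul_eq_zero.mp h3).resolve_left hsqne
      have hMji : M j i = 0 := by
        have h3 : (σ i ^ 2 - σ j ^ 2) * M j i = 0 := by
          linear_combination σ j * e1 i j - σ i * e2 i j
        exact (mul_eq_zero.mp h3).resolve_left hsqne
      rw [hMij, hMji]; ring
  have hMf : M * Matrix.diagonal f = Matrix.diagonal f * Mᵀ := by
    ext i j
    rw [Matrix.mul_diagonal, Matrix.diagonal_mul, Matrix.transpose_apply]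
    exact key i j
  have hTf : (U * Matrix.diagonal f * Vᵀ)ᵀ = V * Matrix.diagonal f * Uᵀ := by
    simp [Matrix.transpose_mul, Matrix.diagonal_transpose, Matrix.mul_assoc]
  have hWsym : Wstarᵀ = Wstar := by
    rw [hWstar, hTf]
    have hL : V * (M * Matrix.diagonal f) * Vᵀ = U * Matrix.diagonal f * Vᵀ := by
      rw [hM]
      calc V * (Vᵀ * U * Matrix.diagonal f) * Vᵀ
          = V * (Vᵀ * (U * (Matrix.diagonal f * Vᵀ))) := by simp only [Matrix.mul_assoc]
        _ = V * Vᵀ * (U * (Matrix.diagonal f * Vᵀ)) := by rw [Matrix.mul_assoc]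
        _ = U * (Matrix.diagonal f * Vᵀ) := by rw [hVV, Matrix.one_mul]
        _ = U * Matrix.diagonal f * Vᵀ := by rw [Matrix.mul_assoc]
    have hR : V * (Matrix.diagonal f * Mᵀ) * Vᵀ = V * Matrix.diagonal f * Uᵀ := by
      rw [hMT]
      calc V * (Matrix.diagonal f * (Uᵀ * V)) * Vᵀ
          = V * (Matrix.diagonal f * (Uᵀ * (V * Vᵀ))) := by simp only [Matrix.mul_assoc]
        _ = V * (Matrix.diagonal f * Uᵀ) := by rw [hVV, Matrix.mul_one]
        _ = V * Matrix.diagonal f * Uᵀ := by rw [Matrix.mul_assoc]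
    calc V * Matrix.diagonal f * Uᵀ
        = V * (Matrix.diagonal f * Mᵀ) * Vᵀ := hR.symm
      _ = V * (M * Matrix.diagonal f) * Vᵀ := by rw [hMf]
      _ = U * Matrix.diagonal f * Vᵀ := hL
  refine ⟨hWsym, ?_⟩
  intro W hWs hWne
  -- nuclear norm of Wstar
  have hWtW : Wstarᵀ * Wstar = V * Matrix.diagonal (fun i => f i * f i) * Vᵀ := by
    rw [hWstar] at hWsym ⊢
    rw [show (U * Matrix.diagonal f * Vᵀ)ᵀ = V * Matrix.diagonal f * Uᵀ from hTf]
    calc V * Matrix.diagonal f * Uᵀ * (U * Matrix.diagonal f * Vᵀ)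
        = V * (Matrix.diagonal f * ((Uᵀ * U) * (Matrix.diagonal f * Vᵀ))) := by
          simp only [Matrix.mul_assoc]
      _ = V * (Matrix.diagonal f * (Matrix.diagonal f * Vᵀ)) := by
          rw [hU, Matrix.one_mul]
      _ = V * (Matrix.diagonal f * Matrix.diagonal f * Vᵀ) := by
          simp only [Matrix.mul_assoc]
      _ = V * (Matrix.diagonal (fun i => f i * f i) * Vᵀ) := by
          rw [Matrix.diagonal_mul_diagonal]
      _ = V * Matrix.diagonal (fun i => f i * f i) * Vᵀ := by rw [Matrix.mul_assoc]
  have hNstar : nuclearNorm Wstar = ∑ i, f i := by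
    rw [nuclearNorm_eq Wstar V _ hV (fun i => mul_self_nonneg _) hWtW]
    exact Finset.sum_congr rfl fun i _ => Real.sqrt_mul_self (hf0 i)
  -- pairing of Z with Wstar
  have hZt : Zᵀ = V * Matrix.diagonal z * Uᵀ := by
    rw [hZ]
    simp [Matrix.transpose_mul, Matrix.diagonal_transpose, Matrix.mul_assoc]
  have hZWstar : ip Z Wstar = ∑ i, f i := by
    rw [ip_eq_trace, hZt, hWstar]
    have h : V * Matrix.diagonal z * Uᵀ * (U * Matrix.diagonal f * Vᵀ)
        = V * Matrix.diagonal (fun i => z i * f i) * Vᵀ := by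
      calc V * Matrix.diagonal z * Uᵀ * (U * Matrix.diagonal f * Vᵀ)
          = V * (Matrix.diagonal z * ((Uᵀ * U) * (Matrix.diagonal f * Vᵀ))) := by
            simp only [Matrix.mul_assoc]
        _ = V * (Matrix.diagonal z * (Matrix.diagonal f * Vᵀ)) := by
            rw [hU, Matrix.one_mul]
        _ = V * (Matrix.diagonal z * Matrix.diagonal f * Vᵀ) := by
            simp only [Matrix.mul_assoc]
        _ = V * (Matrix.diagonal (fun i => z i * f i) * Vᵀ) := by
            rw [Matrix.diagonal_mul_diagonal]
        _ = V * Matrix.diagonal (fun i => z i * f i) * Vᵀ := by rw [Matrix.mul_assoc]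
    rw [h, trace_conj_diag V _ hV]
    exact Finset.sum_congr rfl fun i _ => hzf i
  -- Wstar - Qt in terms of Z
  have h6 : Qt - Wstar = (1 / μ) • Z := by
    rw [hSVD, hWstar, hZ, hD]
    have hfun : (fun i => σ i - f i) = fun i => (1 / μ) * z i := by
      funext i
      simp only [hz]
      field_simp
    calc U * Matrix.diagonal σ * Vᵀ - U * Matrix.diagonal f * Vᵀ
        = U * (Matrix.diagonal σ - Matrix.diagonal f) * Vᵀ := by
          rw [Matrix.mul_sub, Matrix.sub_mul]
      _ = U * Matrix.diagonal (fun i => σ i - f i) * Vᵀ := by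
          rw [← Matrix.diagonal_sub]
      _ = U * Matrix.diagonal (fun i => (1 / μ) * z i) * Vᵀ := by rw [hfun]
      _ = U * ((1 / μ) • Matrix.diagonal z) * Vᵀ := by
          rw [← Matrix.diagonal_smul]; rfl
      _ = (1 / μ) • (U * Matrix.diagonal z * Vᵀ) := by
          rw [mul_smul_comm, smul_mul_assoc]
  have h7 : Wstar - Qt = (-(1 / μ)) • Z := by
    rw [show Wstar - Qt = -(Qt - Wstar) from (neg_sub _ _).symm, h6, neg_smul]
  -- antisymmetric part
  have hanti : (Qt - Q)ᵀ = -(Qt - Q) := by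
    ext i j
    simp only [hQt, Matrix.transpose_apply, Matrix.sub_apply, Matrix.neg_apply,
      Matrix.smul_apply, Matrix.add_apply, smul_eq_mul]
    ring
  have hexpX : ∀ X : Matrix (Fin n) (Fin n) ℝ, Xᵀ = X →
      frobSq (X - Q) = frobSq (X - Qt) + frobSq (Qt - Q) := by
    intro X hX
    have hdec : X - Q = (X - Qt) + (Qt - Q) := by abel
    rw [hdec, frobSq_add,
      ip_symm_antisym _ _ (by rw [Matrix.transpose_sub, hX, hQtT]) hanti]
    ring
  have hexpWstar := hexpX Wstar hWsym
  have hexpW := hexpX W hWs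
  have hexp2 : frobSq (W - Qt)
      = frobSq (W - Wstar) + 2 * ip (W - Wstar) (Wstar - Qt) + frobSq (Wstar - Qt) := by
    have hdec : W - Qt = (W - Wstar) + (Wstar - Qt) := by abel
    rw [hdec, frobSq_add]
  have hcross : ip (W - Wstar) (Wstar - Qt)
      = (1 / μ) * ip Z Wstar - (1 / μ) * ip Z W := by
    rw [h7, ip_smul_right, ip_comm, ip_sub_right]
    ring
  have hNW : ip Z W ≤ nuclearNorm W := by
    rw [hZ]
    exact ip_Z_le_nuclear U V z hU hV hz0 hz1 W hWs
  have hpos : 0 < frobSq (W - Wstar) := frobSq_pos _ (sub_ne_zero.mpr hWne)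
  have hmul : (1 / μ) * ip Z W ≤ (1 / μ) * nuclearNorm W :=
    mul_le_mul_of_nonneg_left hNW hμ'.le
  have hX4 : (1 / μ) * nuclearNorm Wstar = (1 / μ) * ip Z Wstar := by
    rw [hNstar, hZWstar]
  linarith [hexpWstar, hexpW, hexp2, hcross, hmul, hpos, hX4]
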